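/- Let m_1, ..., m_q be monomials in 4 variables (represented as exponent vectors in Fin 4 → ℕ), let α_r = max_s (m_s)_r, and for each s define m'_s by (m'_s)_r = α_r if (m_s)_r = α_r and 0 otherwise. If for indices i, j, k we have m_k divides lcm(m_i, m_j) (i.e., (m_k)_r ≤ max((m_i)_r, (m_j)_r) for all r), then m'_k divides lcm(m'_i, m'_j). -/
import Mathlib

theorem twin_divides_lcm (q : ℕ) (m : Fin q → Fin 4 → ℕ)
    (α : Fin 4 → ℕ) (hα : ∀ r, α r = Finset.univ.sup (fun s => m s r))
    (m' : Fin q → Fin 4 → ℕ)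
    (hm' : ∀ s r, m' s r = if m s r = α r then α r else 0)
    (i j k : Fin q)
    (hdiv : ∀ r, m k r ≤ max (m i r) (m j r)) :
    ∀ r, m' k r ≤ max (m' i r) (m' j r) := by
  intro r
  have hle : ∀ s, m s r ≤ α r := fun s => (hα r) ▸ Finset.le_sup (f := fun s => m s r) (Finset.mem_univ s)
  rw [hm' k r]
  split
  · next h =>
    have := hdiv r
    rw [h] at this
    rcases le_max_iff.mp this with h' | h'
    · have : m i r = α r := le_antisymm (hle i) h'
      rw [hm' i r, if_pos this]
      exact le_max_left _ _
    · have : m j r = α r := le_antisymm (hle j) h'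
      rw [hm' j r, if_pos this]
      exact le_max_right _ _
  · exact Nat.zero_le _
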